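/- Consider the ordinary differential equation y''(x) = ½ ( y'(x) + e^{−2x} y'(x)³ ). Then: (i) for every C₁ ∈ ℝ ∖ {0}, C₂ ∈ ℝ and ε ∈ {1, −1}, the function y(x) := 2 ε C₁⁻¹ √(C₁ eˣ + 1) + C₂ satisfies the equation at every x with C₁ eˣ + 1 > 0; (ii) for every C₂ ∈ ℝ and ε ∈ {1, −1}, the function y(x) := ε eˣ + C₂ satisfies the equation for all x ∈ ℝ; (iii) every constant function y(x) := C₂ satisfies the equation for all x ∈ ℝ. -/

import Mathlib

open Real

private lemma aux_hd (C₁ C₂ ε : ℝ) (hC : C₁ ≠ 0) {x : ℝ} (hx : 0 < C₁ * Real.exp x + 1) :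
    HasDerivAt (fun t : ℝ => 2 * ε * C₁⁻¹ * Real.sqrt (C₁ * Real.exp t + 1) + C₂)
      (ε * Real.exp x / Real.sqrt (C₁ * Real.exp x + 1)) x := by
  have hs : Real.sqrt (C₁ * Real.exp x + 1) ≠ 0 := ne_of_gt (Real.sqrt_pos.mpr hx)
  have h1 : HasDerivAt (fun t : ℝ => C₁ * Real.exp t + 1) (C₁ * Real.exp x) x :=
    ((Real.hasDerivAt_exp x).const_mul C₁).add_const 1
  have h2 := (h1.sqrt (ne_of_gt hx)).const_mul (2 * ε * C₁⁻¹)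
  have h3 := h2.add_const C₂
  refine h3.congr_deriv ?_
  field_simp

private lemma aux_deriv (C₁ C₂ ε : ℝ) (hC : C₁ ≠ 0) {x : ℝ} (hx : 0 < C₁ * Real.exp x + 1) :
    deriv (fun t : ℝ => 2 * ε * C₁⁻¹ * Real.sqrt (C₁ * Real.exp t + 1) + C₂) x
      = ε * Real.exp x / Real.sqrt (C₁ * Real.exp x + 1) :=
  (aux_hd C₁ C₂ ε hC hx).deriv

theorem stmt_16 :
    (∀ C₁ C₂ ε : ℝ, C₁ ≠ 0 → (ε = 1 ∨ ε = -1) →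
      ∀ x : ℝ, 0 < C₁ * Real.exp x + 1 →
        deriv (deriv (fun t : ℝ => 2 * ε * C₁⁻¹ * Real.sqrt (C₁ * Real.exp t + 1) + C₂)) x =
          (1/2) * (deriv (fun t : ℝ => 2 * ε * C₁⁻¹ * Real.sqrt (C₁ * Real.exp t + 1) + C₂) x
            + Real.exp (-2 * x) *
              (deriv (fun t : ℝ => 2 * ε * C₁⁻¹ * Real.sqrt (C₁ * Real.exp t + 1) + C₂) x)^3)) ∧
    (∀ C₂ ε : ℝ, (ε = 1 ∨ ε = -1) →
      ∀ x : ℝ,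
        deriv (deriv (fun t : ℝ => ε * Real.exp t + C₂)) x =
          (1/2) * (deriv (fun t : ℝ => ε * Real.exp t + C₂) x
            + Real.exp (-2 * x) * (deriv (fun t : ℝ => ε * Real.exp t + C₂) x)^3)) ∧
    (∀ C₂ : ℝ, ∀ x : ℝ,
        deriv (deriv (fun _ : ℝ => C₂)) x =
          (1/2) * (deriv (fun _ : ℝ => C₂) x
            + Real.exp (-2 * x) * (deriv (fun _ : ℝ => C₂) x)^3)) := by
  refine ⟨?_, ?_, ?_⟩
  · intro C₁ C₂ ε hC hε x hx
    -- the set where C₁ e^t + 1 > 0 is open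
    have hopen : IsOpen {t : ℝ | 0 < C₁ * Real.exp t + 1} :=
      isOpen_lt continuous_const (by continuity)
    have hmem : {t : ℝ | 0 < C₁ * Real.exp t + 1} ∈ nhds x := hopen.mem_nhds hx
    have heq : deriv (fun t : ℝ => 2 * ε * C₁⁻¹ * Real.sqrt (C₁ * Real.exp t + 1) + C₂)
        =ᶠ[nhds x] fun t => ε * Real.exp t / Real.sqrt (C₁ * Real.exp t + 1) := by
      filter_upwards [hmem] with t ht
      exact aux_deriv C₁ C₂ ε hC ht
    rw [heq.deriv_eq]
    -- derivative of g
    have hs : Real.sqrt (C₁ * Real.exp x + 1) ≠ 0 := ne_of_gt (Real.sqrt_pos.mpr hx)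
    have h1 : HasDerivAt (fun t : ℝ => C₁ * Real.exp t + 1) (C₁ * Real.exp x) x :=
      ((Real.hasDerivAt_exp x).const_mul C₁).add_const 1
    have hg : HasDerivAt (fun t => ε * Real.exp t / Real.sqrt (C₁ * Real.exp t + 1))
        ((ε * Real.exp x * Real.sqrt (C₁ * Real.exp x + 1)
          - ε * Real.exp x * (C₁ * Real.exp x / (2 * Real.sqrt (C₁ * Real.exp x + 1))))
          / (Real.sqrt (C₁ * Real.exp x + 1))^2) x :=
      ((Real.hasDerivAt_exp x).const_mul ε).div (h1.sqrt (ne_of_gt hx)) hs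
    rw [hg.deriv, aux_deriv C₁ C₂ ε hC hx]
    have hsq : Real.sqrt (C₁ * Real.exp x + 1) ^ 2 = C₁ * Real.exp x + 1 :=
      Real.sq_sqrt hx.le
    have hex : Real.exp (-2 * x) * (Real.exp x)^3 = Real.exp x := by
      rw [← Real.exp_nat_mul, ← Real.exp_add]
      ring_nf
    have hε3 : ε ^ 3 = ε := by rcases hε with h | h <;> rw [h] <;> ring
    have hx' : C₁ * Real.exp x + 1 ≠ 0 := ne_of_gt hx
    have key : Real.exp (-2*x) * (ε * Real.exp x / Real.sqrt (C₁ * Real.exp x + 1))^3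
        = ε * Real.exp x / Real.sqrt (C₁ * Real.exp x + 1)^3 := by
      rw [div_pow, mul_pow, hε3, ← mul_div_assoc, mul_left_comm, hex]
    rw [key]
    have h3 : Real.sqrt (C₁ * Real.exp x + 1) ^ 3
        = Real.sqrt (C₁ * Real.exp x + 1) * (C₁ * Real.exp x + 1) := by
      rw [pow_succ', hsq]
    rw [h3, hsq]
    generalize Real.sqrt (C₁ * Real.exp x + 1) = S at hs hsq ⊢
    field_simp
    rw [hsq, mul_comm (Real.exp x) C₁]
    field_simp
    ring
  · intro C₂ ε hε x
    have hd : ∀ t : ℝ, deriv (fun t : ℝ => ε * Real.exp t + C₂) t = ε * Real.exp t := by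
      intro t
      exact (((Real.hasDerivAt_exp t).const_mul ε).add_const C₂).deriv
    rw [funext hd]
    rw [((Real.hasDerivAt_exp x).const_mul ε).deriv]
    have hex : Real.exp (-2 * x) * (Real.exp x)^3 = Real.exp x := by
      rw [← Real.exp_nat_mul, ← Real.exp_add]; ring_nf
    have hε3 : ε ^ 3 = ε := by rcases hε with h | h <;> rw [h] <;> ring
    rw [mul_pow, hε3]
    linear_combination (-ε/2) * hex
  · intro C₂ x
    simp
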